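/- For the GUE correlation kernel K_N(x,y) = Σ_{n=0}^{N-1} ψ_n(x)ψ_n(y)/(p_n,p_n) with ψ_n(x) = e^{-x²/2}·2^{-n}H_n(x), the diagonal derivative identity holds: d/dt K_N(t,t) = -(2/(p_{N-1},p_{N-1})) ψ_N(t) ψ_{N-1}(t), where (p_{N-1},p_{N-1}) = √π·2^{-N+1}·(N-1)!. -/

import Mathlib

open Real Finset

/-- Physicists' Hermite polynomials. -/
noncomputable def physHermite : ℕ → ℝ → ℝ
  | 0 => fun _ => 1
  | 1 => fun x => 2 * x
  | (n + 2) => fun x => 2 * x * physHermite (n + 1) x - 2 * (n + 1) * physHermite n x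

/-- Hermite wave function `ψ_n(x) = e^{-x²/2} 2^{-n} H_n(x)`. -/
noncomputable def psiH (n : ℕ) (x : ℝ) : ℝ :=
  Real.exp (-x ^ 2 / 2) * physHermite n x / 2 ^ n

/-- GUE correlation kernel `K_N(x,y) = Σ_{n<N} ψ_n(x)ψ_n(y) / (√π n!/2ⁿ)`. -/
noncomputable def kerGUE (N : ℕ) (x y : ℝ) : ℝ :=
  ∑ n ∈ Finset.range N, psiH n x * psiH n y / (Real.sqrt Real.pi * (Nat.factorial n) / 2 ^ n)

lemma Hrec (n : ℕ) (x : ℝ) :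
    physHermite (n + 1) x = 2 * x * physHermite n x - 2 * n * physHermite (n - 1) x := by
  cases n with
  | zero => simp [physHermite]
  | succ m => simp [physHermite]

lemma H_hasDerivAt (n : ℕ) (x : ℝ) :
    HasDerivAt (fun y => physHermite n y) (2 * n * physHermite (n - 1) x) x := by
  induction n using Nat.twoStepInduction generalizing x with
  | zero => simpa [physHermite] using (hasDerivAt_const x (1:ℝ))
  | one =>
    have := (hasDerivAt_id x).const_mul (2:ℝ)
    simpa [physHermite] using this
  | more n ih1 ih2 =>
    have h1 : HasDerivAt (fun y : ℝ => 2 * y * physHermite (n+1) y)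
        (2 * physHermite (n+1) x + 2 * x * (2*(n+1)*physHermite ((n+1)-1) x)) x := by
      have := (((hasDerivAt_id x).const_mul (2:ℝ)).mul (ih2 x))
      simpa [Pi.mul_def] using this
    have h2 : HasDerivAt (fun y : ℝ => 2 * (n+1) * physHermite n y)
        (2 * (n+1) * (2*n*physHermite (n-1) x)) x := by
      simpa [mul_assoc] using (ih1 x).const_mul (2*((n:ℝ)+1))
    have h := h1.sub h2
    have heq : (fun y : ℝ => 2 * y * physHermite (n+1) y - 2 * (n+1) * physHermite n y)
        = fun y => physHermite (n+2) y := by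
      funext y; simp [physHermite]
    simp only [Pi.sub_def] at h
    rw [heq] at h
    refine h.congr_deriv (Eq.symm ?_)
    simp only [Nat.add_sub_cancel]
    have hr := Hrec n x
    push_cast
    linear_combination (2*((n:ℝ)+1)) * hr

lemma psiH_hasDerivAt (n : ℕ) (x : ℝ) :
    HasDerivAt (fun s => psiH n s)
      ((Real.exp (-x^2/2) * (2*n*physHermite (n-1) x)
        - x * Real.exp (-x^2/2) * physHermite n x) / 2^n) x := by
  have hq : HasDerivAt (fun s : ℝ => -s^2/2) (-x) x := by
    have := ((hasDerivAt_pow 2 x).neg.div_const 2)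
    refine this.congr_deriv (Eq.symm ?_)
    simp; ring
  have hexp : HasDerivAt (fun s : ℝ => Real.exp (-s^2/2)) (Real.exp (-x^2/2) * -x) x := hq.exp
  have h := (hexp.mul (H_hasDerivAt n x)).div_const ((2:ℝ)^n)
  have heq : (fun s : ℝ => Real.exp (-s^2/2) * physHermite n s / 2^n) = fun s => psiH n s := by
    funext s; simp [psiH]
  simp only [Pi.mul_apply] at h
  rw [heq] at h
  refine h.congr_deriv (Eq.symm ?_)
  ring

/-- Diagonal derivative identity:
`d/dt K_N(t,t) = -(2/(√π 2^{-N+1} (N-1)!)) ψ_N(t) ψ_{N-1}(t)`. -/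
theorem stmt_9 (N : ℕ) (hN : 1 ≤ N) (t : ℝ) :
    deriv (fun s => kerGUE N s s) t =
      -(2 / (Real.sqrt Real.pi * (2 : ℝ) ^ (-(N : ℝ) + 1) * (Nat.factorial (N - 1)))) *
        psiH N t * psiH (N - 1) t := by
  obtain ⟨M, rfl⟩ : ∃ M, N = M + 1 := ⟨N - 1, (Nat.succ_pred_eq_of_pos hN).symm⟩
  set Dp : ℕ → ℝ := fun n =>
    (Real.exp (-t^2/2) * (2*n*physHermite (n-1) t)
      - t * Real.exp (-t^2/2) * physHermite n t) / 2^n with hDp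
  have hker : HasDerivAt (fun s => kerGUE (M+1) s s)
      (∑ n ∈ Finset.range (M+1),
        (Dp n * psiH n t + psiH n t * Dp n) / (Real.sqrt Real.pi * (Nat.factorial n) / 2 ^ n)) t := by
    have : (fun s => kerGUE (M+1) s s)
        = fun s => ∑ n ∈ Finset.range (M+1),
            psiH n s * psiH n s / (Real.sqrt Real.pi * (Nat.factorial n) / 2 ^ n) := by
      funext s; rfl
    rw [this]
    exact HasDerivAt.fun_sum fun n _ =>
      ((psiH_hasDerivAt n t).mul (psiH_hasDerivAt n t)).div_const _
  rw [hker.deriv]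
  -- telescoping
  set A : ℕ → ℝ := fun n =>
    Real.exp (-t^2) * (2*n) * (physHermite (n-1) t * physHermite n t)
      / (Real.sqrt Real.pi * (Nat.factorial n) * 2^n) with hA
  have hsp : Real.sqrt Real.pi ≠ 0 := ne_of_gt (Real.sqrt_pos.mpr Real.pi_pos)
  have hexp2 : Real.exp (-t^2) = Real.exp (-t^2/2) * Real.exp (-t^2/2) := by
    rw [← Real.exp_add]; ring_nf
  have hterm : ∀ n, (Dp n * psiH n t + psiH n t * Dp n)
      / (Real.sqrt Real.pi * (Nat.factorial n) / 2 ^ n) = A n - A (n+1) := by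
    intro n
    have hr := Hrec n t
    have hfn : ((Nat.factorial n : ℝ)) ≠ 0 := Nat.cast_ne_zero.mpr (Nat.factorial_ne_zero n)
    have h2n : ((2:ℝ)^n) ≠ 0 := by positivity
    simp only [hDp, hA, psiH, Nat.add_sub_cancel, Nat.factorial_succ, hexp2]
    rw [hr]
    push_cast
    field_simp
    ring
  rw [Finset.sum_congr rfl (fun n _ => hterm n), Finset.sum_range_sub' A]
  have hA0 : A 0 = 0 := by simp [hA]
  rw [hA0, zero_sub]
  have hr2 : (2:ℝ) ^ (-(((M+1):ℕ):ℝ) + 1) = ((2:ℝ)^M)⁻¹ := by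
    rw [show -(((M+1):ℕ):ℝ) + 1 = -(M:ℝ) by push_cast; ring]
    rw [Real.rpow_neg (by norm_num), Real.rpow_natCast]
  have hfM : ((Nat.factorial M : ℝ)) ≠ 0 := Nat.cast_ne_zero.mpr (Nat.factorial_ne_zero M)
  simp only [hA, psiH, Nat.add_sub_cancel, Nat.factorial_succ, hr2, hexp2]
  push_cast
  field_simp
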